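/- Let G be an n×n real matrix satisfying the algebraic Riccati equation G·R·G + Q·G + G·Q + P = 0 with diagonal n×n real matrices P, Q, R, and let M be a diagonal n×n real matrix with M² = R. Then the matrix G̃ = M·G·M + Q satisfies G̃² = Q² − P·R. In particular, when R is invertible the Riccati equation can be reduced to the canonical form G̃² = Δ with Δ = Q² − P·R by the transformation G ↦ M·G·M + Q. -/
import Mathlib

lemma diag_comm' {n : ℕ} {A B : Matrix (Fin n) (Fin n) ℝ} (hA : A.IsDiag) (hB : B.IsDiag) :
    A * B = B * A := by
  rw [← hA.diagonal_diag, ← hB.diagonal_diag, Matrix.diagonal_mul_diagonal,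
    Matrix.diagonal_mul_diagonal]
  simp [mul_comm]

/-- Let `G` satisfy the algebraic Riccati equation
`G R G + Q G + G Q + P = 0` with diagonal `P, Q, R`, and let `M` be diagonal with
`M² = R`.  Then `G̃ = M G M + Q` satisfies `G̃² = Q² - P R`; in particular, when
`R` is invertible the Riccati equation reduces to the canonical form `G̃² = Δ`
with `Δ = Q² - P R`. -/
theorem stmt11 {n : ℕ} (G P Q R M : Matrix (Fin n) (Fin n) ℝ)
    (hP : P.IsDiag) (hQ : Q.IsDiag) (hR : R.IsDiag) (hM : M.IsDiag)
    (hRic : G * R * G + Q * G + G * Q + P = 0)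
    (hM2 : M ^ 2 = R) :
    (M * G * M + Q) ^ 2 = Q ^ 2 - P * R := by
  have hMQ : M * Q = Q * M := diag_comm' hM hQ
  have hMP : M * P = P * M := diag_comm' hM hP
  have hMM : M * M = R := by rw [← hM2]; noncomm_ring
  have key : G * R * G + Q * G + G * Q = -P := eq_neg_of_add_eq_zero_left hRic
  have e1 : M * G * M * (M * G * M) = M * (G * R * G) * M := by
    rw [← hMM]; noncomm_ring
  have e2 : M * G * M * Q = M * (G * Q) * M := by
    rw [mul_assoc (M * G), hMQ]; noncomm_ring
  have e3 : Q * (M * G * M) = M * (Q * G) * M := by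
    rw [mul_assoc M G M, ← mul_assoc Q M, ← hMQ]; noncomm_ring
  calc (M * G * M + Q) ^ 2
      = M * G * M * (M * G * M) + M * G * M * Q + Q * (M * G * M) + Q ^ 2 := by
        noncomm_ring
    _ = M * (G * R * G + Q * G + G * Q) * M + Q ^ 2 := by
        rw [e1, e2, e3]; noncomm_ring
    _ = M * (-P) * M + Q ^ 2 := by rw [key]
    _ = Q ^ 2 - P * R := by
        rw [← hMM, show M * (-P) = -(P * M) from by rw [mul_neg, hMP]]; noncomm_ring
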